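/- Let S be a complete separable metric space. The map μ ↦ μ^∞ from M₁(S), the space of Borel probability measures on S, to M₁(S^ℕ), sending a probability measure to the corresponding infinite product (i.i.d.) measure, is measurable with respect to the σ-algebras generated by the evaluation maps ν ↦ ν(B). -/
import Mathlib

open MeasureTheory ProbabilityTheory TopologicalSpace

noncomputable section

/-- `π` is the infinite product (i.i.d.) measure on `ℕ → X` with all factors `ν`. -/
def IsIIDProduct {X : Type*} [MeasurableSpace X] (ν : Measure X) (π : Measure (ℕ → X)) : Prop :=
  IsProbabilityMeasure π ∧
    ∀ (n : ℕ) (A : Fin n → Set X), (∀ i, MeasurableSet (A i)) →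
      π {x | ∀ i : Fin n, x (i : ℕ) ∈ A i} = ∏ i : Fin n, ν (A i)

/-- Finite-dimensional boxes in `ℕ → S`. -/
def iidBoxes (S : Type*) [MeasurableSpace S] : Set (Set (ℕ → S)) :=
  {t | ∃ (n : ℕ) (A : Fin n → Set S), (∀ i, MeasurableSet (A i)) ∧
    t = {x | ∀ i : Fin n, x (i : ℕ) ∈ A i}}

lemma isPiSystem_iidBoxes {S : Type*} [MeasurableSpace S] : IsPiSystem (iidBoxes S) := by
  rintro t1 ⟨n, A, hA, rfl⟩ t2 ⟨m, B, hB, rfl⟩ -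
  refine ⟨max n m, fun i => (if h : (i : ℕ) < n then A ⟨i, h⟩ else Set.univ) ∩
      (if h : (i : ℕ) < m then B ⟨i, h⟩ else Set.univ), fun i => ?_, ?_⟩
  · refine MeasurableSet.inter ?_ ?_ <;> split <;>
      first | exact hA _ | exact hB _ | exact MeasurableSet.univ
  · ext x
    simp only [Set.mem_inter_iff, Set.mem_setOf_eq]
    constructor
    · rintro ⟨h1, h2⟩ i
      constructor
      · split
        · exact h1 _
        · trivial
      · split
        · exact h2 _
        · trivial
    · intro h
      constructor
      · intro i
        have := (h ⟨i, lt_of_lt_of_le i.2 (le_max_left n m)⟩).1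
        simpa [i.2] using this
      · intro i
        have := (h ⟨i, lt_of_lt_of_le i.2 (le_max_right n m)⟩).2
        simpa [i.2] using this

lemma pi_eq_generateFrom_iidBoxes (S : Type*) [MeasurableSpace S] :
    (MeasurableSpace.pi : MeasurableSpace (ℕ → S)) =
      MeasurableSpace.generateFrom (iidBoxes S) := by
  apply le_antisymm
  · rw [MeasurableSpace.pi]
    refine iSup_le fun i => ?_
    refine Measurable.comap_le ?_
    intro B hB
    apply MeasurableSpace.measurableSet_generateFrom
    refine ⟨i + 1, fun j => if (j : ℕ) = i then B else Set.univ, fun j => ?_, ?_⟩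
    · dsimp only
      split_ifs
      · exact hB
      · exact MeasurableSet.univ
    · ext x
      simp only [Set.mem_preimage, Set.mem_setOf_eq]
      constructor
      · intro hx j
        split_ifs with h
        · rw [h]; exact hx
        · trivial
      · intro h
        simpa using h ⟨i, Nat.lt_succ_self i⟩
  · refine MeasurableSpace.generateFrom_le ?_
    rintro t ⟨n, A, hA, rfl⟩
    have : {x : ℕ → S | ∀ i : Fin n, x (i : ℕ) ∈ A i} =
        ⋂ i : Fin n, (fun x : ℕ → S => x (i : ℕ)) ⁻¹' A i := by
      ext x; simp
    rw [this]
    exact MeasurableSet.iInter fun i => measurable_pi_apply _ (hA i)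

/-- The map `μ ↦ μ^∞` from probability measures on `S` (with the σ-algebra generated by
evaluations) to measures on `S^ℕ` is measurable. -/
theorem stmt3 {S : Type*} [MetricSpace S] [CompleteSpace S] [SeparableSpace S]
    [MeasurableSpace S] [BorelSpace S]
    (iidProd : {μ : Measure S // IsProbabilityMeasure μ} → Measure (ℕ → S))
    (hiid : ∀ μ, IsIIDProduct μ.1 (iidProd μ)) :
    Measurable iidProd := by
  apply Measure.measurable_of_measurable_coe
  have key : ∀ ⦃t : Set (ℕ → S)⦄, MeasurableSet t →
      Measurable fun μ => iidProd μ t := by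
    refine MeasurableSpace.induction_on_inter (pi_eq_generateFrom_iidBoxes S)
      isPiSystem_iidBoxes ?_ ?_ ?_ ?_
    · simp only [measure_empty]
      exact measurable_const
    · rintro t ⟨n, A, hA, rfl⟩
      have h : (fun μ : {μ : Measure S // IsProbabilityMeasure μ} =>
          iidProd μ {x | ∀ i : Fin n, x (i : ℕ) ∈ A i}) =
          fun μ => ∏ i : Fin n, μ.1 (A i) := by
        funext μ; exact (hiid μ).2 n A hA
      rw [h]
      exact Finset.measurable_prod _ fun i _ =>
        (Measure.measurable_coe (hA i)).comp measurable_subtype_coe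
    · intro t ht hC
      have h : (fun μ : {μ : Measure S // IsProbabilityMeasure μ} => iidProd μ tᶜ) =
          fun μ => 1 - iidProd μ t := by
        funext μ
        have : IsProbabilityMeasure (iidProd μ) := (hiid μ).1
        rw [measure_compl ht (measure_ne_top _ _), measure_univ]
      rw [h]
      exact measurable_const.sub hC
    · intro f hdisj hmeas hC
      have h : (fun μ : {μ : Measure S // IsProbabilityMeasure μ} =>
          iidProd μ (⋃ i, f i)) = fun μ => ∑' i, iidProd μ (f i) := by
        funext μ; exact measure_iUnion hdisj hmeas
      rw [h]
      exact Measurable.ennreal_tsum hC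
  exact fun s hs => key hs
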